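/- arXiv:2107.04360 — 2 statements merged into one kernel-verified Lean document; each statement's English description precedes it below -/
import Mathlib

section
/- Fix f_min ∈ R, ŷ ∈ R, λ > 0 and define ẼI(σ̂) = (f_min - ŷ)·sigm_λ((f_min - ŷ)/σ̂) + σ̂·γ((f_min - ŷ)/σ̂) for σ̂ > 0, with sigm_λ(t) = 1/(1+e^{-λt}) and γ(t) = e^{-t²/2}. Then as σ̂ → 0⁺, ẼI(σ̂) → f_min - ŷ if f_min > ŷ, and ẼI(σ̂) → 0 if f_min < ŷ. -/
theorem modified_EI_vanishing_uncertainty (fmin yhat : ℝ) (lam : ℝ) (hlam : 0 < lam) :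
    (fmin > yhat →
      Filter.Tendsto
        (fun σ : ℝ => (fmin - yhat) * (1 / (1 + Real.exp (-(lam * ((fmin - yhat) / σ))))) +
          σ * Real.exp (-((fmin - yhat) / σ) ^ 2 / 2))
        (nhdsWithin 0 (Set.Ioi 0)) (nhds (fmin - yhat))) ∧
    (fmin < yhat →
      Filter.Tendsto
        (fun σ : ℝ => (fmin - yhat) * (1 / (1 + Real.exp (-(lam * ((fmin - yhat) / σ))))) +
          σ * Real.exp (-((fmin - yhat) / σ) ^ 2 / 2))
        (nhdsWithin 0 (Set.Ioi 0)) (nhds 0)) := by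
  set d := fmin - yhat with hd
  -- second term tends to 0 always
  have hterm2 : Filter.Tendsto (fun σ : ℝ => σ * Real.exp (-(d / σ) ^ 2 / 2))
      (nhdsWithin 0 (Set.Ioi 0)) (nhds 0) := by
    apply squeeze_zero' (g := fun σ : ℝ => σ)
    · filter_upwards [self_mem_nhdsWithin] with σ hσ
      exact le_of_lt (mul_pos hσ (Real.exp_pos _))
    · filter_upwards [self_mem_nhdsWithin] with σ hσ
      calc σ * Real.exp (-(d / σ) ^ 2 / 2) ≤ σ * 1 := by
            apply mul_le_mul_of_nonneg_left _ (le_of_lt hσ)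
            rw [Real.exp_le_one_iff]
            nlinarith [sq_nonneg (d / σ)]
        _ = σ := mul_one σ
    · exact (continuous_id.tendsto 0).mono_left nhdsWithin_le_nhds
  constructor
  · intro h
    have hdpos : 0 < d := by simp [hd]; linarith
    have h1 : Filter.Tendsto (fun σ : ℝ => d / σ) (nhdsWithin 0 (Set.Ioi 0)) Filter.atTop := by
      simp only [div_eq_mul_inv]
      exact Filter.Tendsto.const_mul_atTop hdpos tendsto_inv_nhdsGT_zero
    have h2 : Filter.Tendsto (fun σ : ℝ => lam * (d / σ)) (nhdsWithin 0 (Set.Ioi 0))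
        Filter.atTop := Filter.Tendsto.const_mul_atTop hlam h1
    have h3 : Filter.Tendsto (fun σ : ℝ => Real.exp (-(lam * (d / σ))))
        (nhdsWithin 0 (Set.Ioi 0)) (nhds 0) :=
      Real.tendsto_exp_atBot.comp (Filter.tendsto_neg_atTop_atBot.comp h2)
    have h4 : Filter.Tendsto (fun σ : ℝ => 1 / (1 + Real.exp (-(lam * (d / σ)))))
        (nhdsWithin 0 (Set.Ioi 0)) (nhds 1) := by
      have := Filter.Tendsto.div
        (tendsto_const_nhds : Filter.Tendsto (fun _ : ℝ => (1:ℝ))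
          (nhdsWithin 0 (Set.Ioi 0)) (nhds 1))
        ((tendsto_const_nhds : Filter.Tendsto (fun _ : ℝ => (1:ℝ))
          (nhdsWithin 0 (Set.Ioi 0)) (nhds 1)).add h3)
        (by norm_num : (1 : ℝ) + 0 ≠ 0)
      simpa [Pi.div_def] using this
    have := (Filter.Tendsto.mul tendsto_const_nhds h4 :
      Filter.Tendsto (fun σ : ℝ => d * (1 / (1 + Real.exp (-(lam * (d / σ))))))
        (nhdsWithin 0 (Set.Ioi 0)) (nhds (d * 1))).add hterm2
    simpa using this
  · intro h
    have hdneg : d < 0 := by simp [hd]; linarith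
    have h1 : Filter.Tendsto (fun σ : ℝ => d / σ) (nhdsWithin 0 (Set.Ioi 0)) Filter.atBot := by
      have : Filter.Tendsto (fun σ : ℝ => (-d) / σ) (nhdsWithin 0 (Set.Ioi 0))
          Filter.atTop := by
        simp only [div_eq_mul_inv]
        exact Filter.Tendsto.const_mul_atTop (by linarith) tendsto_inv_nhdsGT_zero
      have := Filter.tendsto_neg_atTop_atBot.comp this
      simpa [Function.comp_def, neg_div, neg_neg] using this
    have h2 : Filter.Tendsto (fun σ : ℝ => lam * (d / σ)) (nhdsWithin 0 (Set.Ioi 0))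
        Filter.atBot := Filter.Tendsto.const_mul_atBot hlam h1
    have h3 : Filter.Tendsto (fun σ : ℝ => Real.exp (-(lam * (d / σ))))
        (nhdsWithin 0 (Set.Ioi 0)) Filter.atTop :=
      Real.tendsto_exp_atTop.comp (Filter.tendsto_neg_atBot_atTop.comp h2)
    have h4 : Filter.Tendsto (fun σ : ℝ => 1 / (1 + Real.exp (-(lam * (d / σ)))))
        (nhdsWithin 0 (Set.Ioi 0)) (nhds 0) := by
      have := (Filter.tendsto_atTop_add_const_left (nhdsWithin 0 (Set.Ioi 0)) (1:ℝ) h3).inv_tendsto_atTop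
      simpa [one_div, Pi.inv_def] using this
    have := (Filter.Tendsto.mul tendsto_const_nhds h4 :
      Filter.Tendsto (fun σ : ℝ => d * (1 / (1 + Real.exp (-(lam * (d / σ))))))
        (nhdsWithin 0 (Set.Ioi 0)) (nhds (d * 0))).add hterm2
    simpa using this
end

section
/- With d_1,…,d_{n+1} as defined via d_i = e_i - ((1 + 1/√(n+1))/n)·𝟙 for i ≤ n and d_{n+1} = (1/√(2(n+1)))·𝟙, the set {x + 0.001·d_i : i = 1,…,n+1} is a simplex for every x ∈ R^n; that is, the n+1 points are affinely independent. -/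
theorem simplex_affinely_independent (n : ℕ) (hn : 1 ≤ n)
    (ones : EuclideanSpace ℝ (Fin n)) (hones : ones = WithLp.toLp 2 (fun _ => (1:ℝ)))
    (d : Fin (n+1) → EuclideanSpace ℝ (Fin n))
    (hd : ∀ i : Fin n, d i.castSucc =
      EuclideanSpace.single i 1 - ((1 + 1 / Real.sqrt (n+1)) / n) • ones)
    (hdlast : d (Fin.last n) = (1 / Real.sqrt (2 * (n+1))) • ones)
    (x : EuclideanSpace ℝ (Fin n)) :
    AffineIndependent ℝ (fun i : Fin (n+1) => x + (0.001 : ℝ) • d i) := by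
  classical
  have hnR : (1:ℝ) ≤ (n:ℝ) := by exact_mod_cast hn
  have hn0 : (n:ℝ) ≠ 0 := by linarith
  have hsq1 : (0:ℝ) < Real.sqrt (n+1) := Real.sqrt_pos.mpr (by positivity)
  have hsq2 : (0:ℝ) < Real.sqrt (2*(n+1)) := Real.sqrt_pos.mpr (by positivity)
  set α : ℝ := (1 + 1 / Real.sqrt (n+1)) / n with hα
  set β : ℝ := 1 / Real.sqrt (2*(n+1)) with hβ
  set γ : ℝ := α + β with hγ
  have hγn : (n:ℝ) * γ ≠ 1 := by
    have h1 : (n:ℝ) * α = 1 + 1 / Real.sqrt (n+1) := by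
      rw [hα]; field_simp
    have h2 : (0:ℝ) < 1 / Real.sqrt (n+1) := by positivity
    have h3 : (0:ℝ) < (n:ℝ) * β := by
      have hb : (0:ℝ) < β := by positivity
      nlinarith
    have hmul : (n:ℝ) * γ = (1 + 1 / Real.sqrt (n+1)) + n * β := by
      rw [hγ, mul_add, h1]
    nlinarith
  set c : ℝ := 0.001 with hc
  have hc0 : c ≠ 0 := by norm_num [hc]
  rw [affineIndependent_iff_linearIndependent_vsub ℝ _ (Fin.last n)]
  let e : Fin n ≃ {i : Fin (n+1) // i ≠ Fin.last n} :=
    { toFun := fun i => ⟨i.castSucc, (Fin.castSucc_lt_last i).ne⟩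
      invFun := fun j => j.1.castPred j.2
      left_inv := fun i => by simp
      right_inv := fun j => by simp }
  rw [← linearIndependent_equiv e]
  have hfun : (fun i : Fin n =>
      ((fun i : Fin (n+1) => x + c • d i) ((e i : {i // i ≠ Fin.last n}) : Fin (n+1))) -ᵥ
        ((fun i : Fin (n+1) => x + c • d i) (Fin.last n)))
      = fun i : Fin n => c • (EuclideanSpace.single i 1 - γ • ones) := by
    funext i
    show (x + c • d i.castSucc) -ᵥ (x + c • d (Fin.last n))
        = c • (EuclideanSpace.single i 1 - γ • ones)
    rw [hd i, hdlast]
    simp only [vsub_eq_sub, hγ, add_smul]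
    module
  show LinearIndependent ℝ _
  rw [show ((fun i : {i // i ≠ Fin.last n} =>
      ((fun i : Fin (n+1) => x + c • d i) (i : Fin (n+1))) -ᵥ
        ((fun i : Fin (n+1) => x + c • d i) (Fin.last n))) ∘ e)
      = fun i : Fin n => c • (EuclideanSpace.single i 1 - γ • ones) from hfun]
  rw [Fintype.linearIndependent_iff]
  intro g hg j
  have hS : ∀ k : Fin n, g k = γ * (∑ i, g i) := by
    intro k
    have hsa : (∑ i : Fin n, g i • c • (EuclideanSpace.single i 1 - γ • ones)
          : EuclideanSpace ℝ (Fin n)) k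
        = ∑ i : Fin n, ((g i • c • (EuclideanSpace.single i 1 - γ • ones)
          : EuclideanSpace ℝ (Fin n)) k) :=
      by rw [WithLp.ofLp_sum, Finset.sum_apply]
    have hck : ∑ i : Fin n, ((g i • c • (EuclideanSpace.single i 1 - γ • ones)
          : EuclideanSpace ℝ (Fin n)) k) = 0 := by
      rw [← hsa, hg]; rfl
    simp only [PiLp.smul_apply, PiLp.sub_apply,
      EuclideanSpace.single_apply, hones, smul_eq_mul] at hck
    have h2 : ∑ i, g i * (c * ((if k = i then (1:ℝ) else 0) - γ * 1)) = 0 := hck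
    have h3 : ∑ i, g i * (c * ((if k = i then (1:ℝ) else 0) - γ * 1))
        = c * (g k - γ * ∑ i, g i) := by
      have key : ∀ i : Fin n, g i * (c * ((if k = i then (1:ℝ) else 0) - γ * 1))
          = (if k = i then c * g i else 0) - c * γ * g i := by
        intro i; by_cases h : k = i <;> simp [h] <;> ring
      rw [Finset.sum_congr rfl fun i _ => key i, Finset.sum_sub_distrib,
        Finset.sum_ite_eq, ← Finset.mul_sum]
      simp only [Finset.mem_univ, if_true]
      ring
    rw [h3] at h2
    rcases mul_eq_zero.mp h2 with h | h
    · exact absurd h hc0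
    · linarith
  have hsum : (∑ i, g i) = (n:ℝ) * γ * (∑ i, g i) := by
    calc (∑ i, g i) = ∑ i : Fin n, γ * (∑ k, g k) := by
          apply Finset.sum_congr rfl; intro i _; exact hS i
      _ = (n:ℝ) * γ * (∑ i, g i) := by
          rw [Finset.sum_const, Finset.card_univ, Fintype.card_fin, nsmul_eq_mul]; ring
  have hS0 : (∑ i, g i) = 0 := by
    have hz : ((n:ℝ) * γ - 1) * (∑ i, g i) = 0 := by linarith [hsum]
    rcases mul_eq_zero.mp hz with h | h
    · exact absurd (by linarith : (n:ℝ) * γ = 1) hγn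
    · exact h
  have := hS j
  rw [hS0] at this
  simpa using this
end
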